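/- For r ≥ 1 and 0 < γ < 1, the quantity Δ(γ, r) = −((1 + rγ) log₂(1 − γ/(1 + rγ)))/γ − log₂(e) is bounded above by 2 − log₂(e) < 0.56. -/

import Mathlib

open Real

private lemma hasDerivAt_aux (γ : ℝ) (hγ : 0 < γ) {u : ℝ} (hu : 0 < u) :
    HasDerivAt (fun u => (u + γ) * (Real.log (u + γ) - Real.log u))
      ((Real.log (u + γ) - Real.log u) + (u + γ) * (1 / (u + γ) - 1 / u)) u := by
  have huγ : (0:ℝ) < u + γ := by linarith
  have h1 : HasDerivAt (fun u : ℝ => u + γ) 1 u := (hasDerivAt_id u).add_const γ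
  have h2 : HasDerivAt (fun u : ℝ => Real.log (u + γ)) (1 / (u + γ)) u := by
    have := (Real.hasDerivAt_log huγ.ne').comp u h1
    simpa [one_div, Function.comp_def] using this
  have h3 : HasDerivAt (fun u : ℝ => Real.log u) (1 / u) u := by
    simpa [one_div] using Real.hasDerivAt_log hu.ne'
  have := h1.mul (h2.sub h3)
  simpa [one_mul, Pi.mul_def, Pi.sub_def] using this

private lemma f_anti (γ : ℝ) (hγ : 0 < γ) :
    AntitoneOn (fun u => (u + γ) * (Real.log (u + γ) - Real.log u)) (Set.Ici 1) := by
  apply antitoneOn_of_deriv_nonpos (convex_Ici 1)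
  · intro x hx
    have hx0 : (0:ℝ) < x := lt_of_lt_of_le one_pos hx
    exact ((hasDerivAt_aux γ hγ hx0).continuousAt).continuousWithinAt
  · intro x hx
    rw [interior_Ici] at hx
    have hx0 : (0:ℝ) < x := lt_trans one_pos hx
    exact (hasDerivAt_aux γ hγ hx0).differentiableAt.differentiableWithinAt
  · intro x hx
    rw [interior_Ici] at hx
    have hx0 : (0:ℝ) < x := lt_trans one_pos hx
    have hxγ : (0:ℝ) < x + γ := by linarith
    rw [(hasDerivAt_aux γ hγ hx0).deriv]
    have hlog : Real.log ((x + γ) / x) ≤ (x + γ) / x - 1 :=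
      Real.log_le_sub_one_of_pos (by positivity)
    rw [Real.log_div hxγ.ne' hx0.ne'] at hlog
    have h1 : (x + γ) * (1 / (x + γ) - 1 / x) = 1 - (x + γ) / x := by
      field_simp
    rw [h1]
    linarith

private lemma key (γ : ℝ) (hγ0 : 0 < γ) (hγ1 : γ < 1) {u : ℝ} (hu : 1 ≤ u) :
    (u + γ) * (Real.log (u + γ) - Real.log u) ≤ 2 * γ * Real.log 2 := by
  have h1 : (u + γ) * (Real.log (u + γ) - Real.log u)
      ≤ (1 + γ) * (Real.log (1 + γ) - Real.log 1) :=
    f_anti γ hγ0 (Set.self_mem_Ici) hu hu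
  have h2 : (1 + γ) * Real.log (1 + γ) ≤ 2 * γ * Real.log 2 := by
    have hc := Real.convexOn_mul_log.2 (by norm_num : (1:ℝ) ∈ Set.Ici (0:ℝ))
      (by norm_num : (2:ℝ) ∈ Set.Ici (0:ℝ)) (by linarith : (0:ℝ) ≤ 1 - γ)
      (le_of_lt hγ0) (by ring : (1 - γ) + γ = 1)
    simp only [smul_eq_mul, Real.log_one, mul_zero, mul_one, add_zero, zero_add] at hc
    have he : 1 - γ + γ * 2 = 1 + γ := by ring
    rw [he] at hc
    nlinarith [hc]
  simp only [Real.log_one, sub_zero] at h1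
  linarith

theorem stmt_5 (γ r : ℝ) (hγ0 : 0 < γ) (hγ1 : γ < 1) (hr : 1 ≤ r) :
    -((1 + r * γ) * Real.logb 2 (1 - γ / (1 + r * γ))) / γ
        - Real.logb 2 (Real.exp 1) ≤ 2 - Real.logb 2 (Real.exp 1)
      ∧ (2 : ℝ) - Real.logb 2 (Real.exp 1) < 0.56 := by
  have hlog2 : Real.log 2 < 0.6931471808 := Real.log_two_lt_d9
  have hlog2' : (0:ℝ) < Real.log 2 := Real.log_pos (by norm_num)
  constructor
  · set u : ℝ := 1 + (r - 1) * γ with hu_def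
    have hu1 : (1:ℝ) ≤ u := by nlinarith
    have hu0 : (0:ℝ) < u := by linarith
    have hs0 : (0:ℝ) < 1 + r * γ := by nlinarith
    have hs : 1 + r * γ = u + γ := by ring
    have harg : 1 - γ / (1 + r * γ) = u / (1 + r * γ) := by
      field_simp
      ring
    rw [harg, hs]
    have huγ : (0:ℝ) < u + γ := by linarith
    have hlogb : Real.logb 2 (u / (u + γ)) = (Real.log u - Real.log (u + γ)) / Real.log 2 := by
      rw [Real.logb, Real.log_div hu0.ne' huγ.ne']
    rw [hlogb]
    have hk := key γ hγ0 hγ1 hu1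
    have hmain : -((u + γ) * ((Real.log u - Real.log (u + γ)) / Real.log 2)) / γ ≤ 2 := by
      rw [div_le_iff₀ hγ0]
      have : -((u + γ) * ((Real.log u - Real.log (u + γ)) / Real.log 2))
          = (u + γ) * (Real.log (u + γ) - Real.log u) / Real.log 2 := by ring
      rw [this, div_le_iff₀ hlog2']
      linarith
    linarith
  · rw [Real.logb, Real.log_exp]
    rw [show (0.56 : ℝ) = 2 - 1.44 by norm_num]
    have : (1.44 : ℝ) < 1 / Real.log 2 := by
      rw [lt_div_iff₀ hlog2']
      nlinarith
    linarith
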